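/- Fix T > 0 and let λ denote Lebesgue measure on [0,T]. Assume that for every ε > 0 there is a continuous solution X^ε of the ε-approximating equation on [0,T]. Then lim_{ε→0} λ({t ∈ [0,T] : X^ε_t ≤ 0}) = 0. -/

import Mathlib

open MeasureTheory Filter Set

/-- `X` is a continuous solution on `[0,T]` of the ε-approximating equation
`X_t = X₀ + a ∫₀ᵗ (s+ε)^{2H-1} / (X_s 1_{X_s>0} + ε) ds − b ∫₀ᵗ X_s ds + σ g(t)`. -/
def approxSol (X₀ a b σ H : ℝ) (g : ℝ → ℝ) (T ε : ℝ) (X : ℝ → ℝ) : Prop :=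
  ContinuousOn X (Set.Icc 0 T) ∧
    ∀ t ∈ Set.Icc (0:ℝ) T,
      X t = X₀ + a * (∫ s in (0:ℝ)..t,
            (s + ε) ^ (2 * H - 1) / ((if 0 < X s then X s else 0) + ε))
          - b * (∫ s in (0:ℝ)..t, X s) + σ * g t

/-- **Proposition 3.1.** The Lebesgue measure of `{t ∈ [0,T] : X^ε_t ≤ 0}`
tends to `0` as `ε → 0`. -/
theorem measure_nonpositive_tendsto_zero
    (X₀ a b σ H : ℝ) (hX₀ : 0 < X₀) (ha : 0 < a) (hb : 0 ≤ b) (hσ : 0 < σ)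
    (hH0 : 0 < H) (hH : H < 1/2)
    (g : ℝ → ℝ) (hgc : ContinuousOn g (Set.Ici 0)) (hg0 : g 0 = 0)
    (T : ℝ) (hT : 0 < T)
    (Xe : ℝ → ℝ → ℝ)
    (hXe : ∀ ε > (0:ℝ), approxSol X₀ a b σ H g T ε (Xe ε)) :
    Tendsto (fun ε => volume {t ∈ Set.Icc (0:ℝ) T | Xe ε t ≤ 0})
      (nhdsWithin 0 (Set.Ioi 0)) (nhds 0) := by
  obtain ⟨G, hG⟩ := (isCompact_Icc : IsCompact (Icc (0:ℝ) T)).exists_bound_of_continuousOn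
    (hgc.mono (fun x hx => hx.1))
  have hG0 : 0 ≤ G := by
    have h := hG 0 ⟨le_refl 0, hT.le⟩
    simpa [hg0] using h
  set c : ℝ := max X₀ 1 with hc
  have hc1 : (1:ℝ) ≤ c := le_max_right _ _
  have hc0 : (0:ℝ) < c := lt_of_lt_of_le one_pos hc1
  have h2H : 0 < 2*H := by linarith
  have h2H1 : 2*H - 1 ≤ 0 := by linarith
  have hTp : (0:ℝ) < T + 1 := by linarith
  have hTpow : (0:ℝ) ≤ (T+1)^(2*H) := Real.rpow_nonneg hTp.le _
  set M : ℝ := c + a * (T+1)^(2*H) / (2*H) + 2*σ*G with hM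
  have hMc : c ≤ M := by
    have h1 : 0 ≤ a * (T+1)^(2*H) / (2*H) := by positivity
    have h2 : 0 ≤ 2*σ*G := by positivity
    simp only [hM]; linarith
  have hM0 : (0:ℝ) < M := lt_of_lt_of_le hc0 hMc
  set k : ℝ := (T+1)^(2*H-1) with hk
  have hk0 : (0:ℝ) < k := Real.rpow_pos_of_pos hTp _
  set B : ℝ := M + b*(M*T) + σ*G with hB
  set C : ℝ := B / (a*k) with hC
  have hmeas : ∀ ε ∈ Ioc (0:ℝ) 1,
      volume {t ∈ Icc (0:ℝ) T | Xe ε t ≤ 0} ≤ ENNReal.ofReal (C * ε) := by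
    rintro ε ⟨hε0, hε1⟩
    obtain ⟨hXc, hXeq⟩ := hXe ε hε0
    set X := Xe ε with hXdef
    have hif : ∀ s, (if 0 < X s then X s else 0) = max (X s) 0 := by
      intro s; rcases lt_or_ge 0 (X s) with h|h
      · simp [h, max_eq_left h.le]
      · simp [not_lt.2 h, max_eq_right h]
    simp only [hif] at hXeq
    set f : ℝ → ℝ := fun s => (s + ε) ^ (2 * H - 1) / (max (X s) 0 + ε) with hfdef
    have hfc : ContinuousOn f (Icc 0 T) := by
      apply ContinuousOn.div
      · exact (continuous_id.add continuous_const).continuousOn.rpow_const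
          (fun x hx => Or.inl (ne_of_gt (by linarith [hx.1] : (0:ℝ) < x + ε)))
      · exact (fun x hx => ((hXc x hx).max continuousWithinAt_const).add continuousWithinAt_const)
      · intro x hx
        have h1 : (0:ℝ) ≤ max (X x) 0 := le_max_right _ _
        exact ne_of_gt (by linarith)
    have hfnn : ∀ s, 0 ≤ s → 0 ≤ f s := by
      intro s hs
      have h1 : (0:ℝ) ≤ max (X s) 0 := le_max_right _ _
      have h2 : (0:ℝ) ≤ (s + ε) ^ (2*H-1) := Real.rpow_nonneg (by linarith) _
      positivity
    have hfint : ∀ u v : ℝ, 0 ≤ u → v ≤ T → u ≤ v → IntervalIntegrable f volume u v := by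
      intro u v hu hv huv
      exact (hfc.mono (by rw [uIcc_of_le huv]; exact Icc_subset_Icc hu hv)).intervalIntegrable
    have hXint : ∀ u v : ℝ, 0 ≤ u → v ≤ T → u ≤ v → IntervalIntegrable X volume u v := by
      intro u v hu hv huv
      exact (hXc.mono (by rw [uIcc_of_le huv]; exact Icc_subset_Icc hu hv)).intervalIntegrable
    have hX0 : X 0 = X₀ := by
      have h := hXeq 0 ⟨le_refl 0, hT.le⟩
      simpa [hg0] using h
    -- uniform bound
    have hbd : ∀ t ∈ Icc (0:ℝ) T, X t ≤ M := by
      intro t ht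
      set S : Set ℝ := Icc (0:ℝ) t ∩ X ⁻¹' (Iic c) with hS
      have hSne : S.Nonempty := ⟨0, ⟨le_refl 0, ht.1⟩, by simp [hX0, hc]⟩
      have hScl : IsClosed S :=
        (hXc.mono (Icc_subset_Icc le_rfl ht.2)).preimage_isClosed_of_isClosed
          isClosed_Icc isClosed_Iic
      have hScp : IsCompact S := isCompact_Icc.of_isClosed_subset hScl inter_subset_left
      set τ : ℝ := sSup S with hτdef
      have hτS : τ ∈ S := hScp.sSup_mem hSne
      have hτ : τ ∈ Icc (0:ℝ) t := hτS.1
      have hXτ : X τ ≤ c := hτS.2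
      have hτT : τ ≤ T := le_trans hτ.2 ht.2
      have hgt : ∀ s ∈ Ioc τ t, c < X s := by
        intro s hs
        by_contra h
        push_neg at h
        have hsS : s ∈ S := ⟨⟨le_trans hτ.1 hs.1.le, hs.2⟩, h⟩
        exact absurd (le_csSup hScp.bddAbove hsS) (not_le.2 hs.1)
      rcases eq_or_lt_of_le hτ.2 with heq | hlt
      · rw [← heq]; exact le_trans hXτ hMc
      · have hτc : c ≤ X τ := by
          have hne : (nhdsWithin τ (Ioc τ t)).NeBot := by
            rw [← mem_closure_iff_nhdsWithin_neBot, closure_Ioc hlt.ne]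
            exact ⟨le_refl τ, hlt.le⟩
          have hcont : ContinuousWithinAt X (Ioc τ t) τ :=
            (hXc.continuousWithinAt ⟨hτ.1, hτT⟩).mono
              (fun s hs => ⟨le_trans hτ.1 hs.1.le, le_trans hs.2 ht.2⟩)
          exact ge_of_tendsto hcont
            (eventually_mem_nhdsWithin.mono (fun s hs => (hgt s hs).le))
        have hpos : ∀ s ∈ Icc τ t, c ≤ X s := by
          intro s hs
          rcases eq_or_lt_of_le hs.1 with h | h
          · rw [← h]; exact hτc
          · exact (hgt s ⟨h, hs.2⟩).le
        have hrint : IntervalIntegrable (fun s => (s+ε)^(2*H-1)) volume τ t := by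
          apply ContinuousOn.intervalIntegrable
          apply ContinuousOn.rpow_const (by fun_prop : ContinuousOn (fun s : ℝ => s + ε) _)
          intro x hx
          rw [uIcc_of_le hlt.le] at hx
          exact Or.inl (ne_of_gt (by linarith [hx.1, hτ.1]))
        have hIf : (∫ s in (0:ℝ)..t, f s) - (∫ s in (0:ℝ)..τ, f s) = ∫ s in τ..t, f s :=
          intervalIntegral.integral_interval_sub_left
            (hfint 0 t le_rfl ht.2 ht.1) (hfint 0 τ le_rfl hτT hτ.1)
        have hIX : (∫ s in (0:ℝ)..t, X s) - (∫ s in (0:ℝ)..τ, X s) = ∫ s in τ..t, X s :=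
          intervalIntegral.integral_interval_sub_left
            (hXint 0 t le_rfl ht.2 ht.1) (hXint 0 τ le_rfl hτT hτ.1)
        have ht' := hXeq t ht
        have hτ' := hXeq τ ⟨hτ.1, hτT⟩
        have heqd : X t = X τ + a * (∫ s in τ..t, f s)
            - b * (∫ s in τ..t, X s) + σ * (g t - g τ) := by
          rw [← hIf, ← hIX, ht', hτ']; ring
        have hInt1 : (∫ s in τ..t, f s) ≤ ∫ s in τ..t, (s+ε)^(2*H-1) := by
          apply intervalIntegral.integral_mono_on hlt.le (hfint τ t hτ.1 ht.2 hlt.le) hrint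
          intro s hs
          have h1 : (1:ℝ) ≤ max (X s) 0 + ε := by
            have h2 := hpos s hs
            have h3 : X s ≤ max (X s) 0 := le_max_left _ _
            linarith
          exact div_le_self (Real.rpow_nonneg (by linarith [hs.1, hτ.1]) _) h1
        have hval : (∫ s in τ..t, (s+ε)^(2*H-1))
            = ((t+ε)^(2*H) - (τ+ε)^(2*H)) / (2*H) := by
          rw [show (fun s : ℝ => (s+ε)^(2*H-1)) = fun s => ((fun x : ℝ => x^(2*H-1)) (s+ε)) from rfl]
          rw [intervalIntegral.integral_comp_add_right (fun x : ℝ => x^(2*H-1)) ε]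
          rw [integral_rpow (Or.inl (by linarith))]
          rw [show 2*H-1+1 = 2*H by ring]
        have hval2 : ((t+ε)^(2*H) - (τ+ε)^(2*H)) / (2*H) ≤ (T+1)^(2*H) / (2*H) := by
          have h1 : (t+ε)^(2*H) ≤ (T+1)^(2*H) :=
            Real.rpow_le_rpow (by linarith [ht.1]) (by linarith [ht.2]) h2H.le
          have h2 : (0:ℝ) ≤ (τ+ε)^(2*H) := Real.rpow_nonneg (by linarith [hτ.1]) _
          exact (div_le_div_iff_of_pos_right h2H).2 (by linarith)
        have hJnn : 0 ≤ ∫ s in τ..t, X s :=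
          intervalIntegral.integral_nonneg hlt.le (fun s hs => le_trans hc0.le (hpos s hs))
        have hgb : g t - g τ ≤ 2*G := by
          have h1 := hG t ht
          have h2 := hG τ ⟨hτ.1, hτT⟩
          rw [Real.norm_eq_abs, abs_le] at h1 h2
          linarith [h1.2, h2.1]
        have hfle : a * (∫ s in τ..t, f s) ≤ a * ((T+1)^(2*H) / (2*H)) :=
          mul_le_mul_of_nonneg_left (le_trans hInt1 (le_of_le_of_eq (le_of_eq hval) rfl |>.trans hval2)) ha.le
        have hble : 0 ≤ b * (∫ s in τ..t, X s) := mul_nonneg hb hJnn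
        have hgle : σ * (g t - g τ) ≤ σ * (2*G) := mul_le_mul_of_nonneg_left hgb hσ.le
        rw [heqd]
        have harr : a * ((T+1)^(2*H) / (2*H)) = a * (T+1)^(2*H) / (2*H) := by ring
        have hσG : σ * (2*G) = 2*σ*G := by ring
        simp only [hM]
        linarith
    -- the measure estimate
    set A : Set ℝ := {t ∈ Icc (0:ℝ) T | X t ≤ 0} with hA
    have hAeq : A = Icc (0:ℝ) T ∩ X ⁻¹' (Iic 0) := by
      ext x; simp [hA, mem_sep_iff]
    have hAm : MeasurableSet A := by
      rw [hAeq]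
      exact (hXc.preimage_isClosed_of_isClosed isClosed_Icc isClosed_Iic).measurableSet
    have hAfin : volume A ≠ ⊤ := by
      have h1 : volume A ≤ volume (Icc (0:ℝ) T) := measure_mono (fun x hx => hx.1)
      exact ne_top_of_le_ne_top (by simp) h1
    have hTeq := hXeq T ⟨hT.le, le_refl T⟩
    have haI : a * (∫ s in (0:ℝ)..T, f s)
        = X T - X₀ + b * (∫ s in (0:ℝ)..T, X s) - σ * g T := by
      rw [hTeq]; ring
    have hIub : a * (∫ s in (0:ℝ)..T, f s) ≤ B := by
      have h1 : X T ≤ M := hbd T ⟨hT.le, le_refl T⟩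
      have h2 : (∫ s in (0:ℝ)..T, X s) ≤ M * T := by
        have h := intervalIntegral.integral_mono_on hT.le (hXint 0 T le_rfl le_rfl hT.le)
          intervalIntegrable_const (fun s hs => hbd s hs)
        rw [intervalIntegral.integral_const, smul_eq_mul] at h
        linarith [h]
      have h3 : -G ≤ g T := by
        have h := hG T ⟨hT.le, le_refl T⟩
        rw [Real.norm_eq_abs, abs_le] at h
        exact h.1
      have h4 : b * (∫ s in (0:ℝ)..T, X s) ≤ b * (M*T) :=
        mul_le_mul_of_nonneg_left h2 hb
      have h5 : σ * (-G) ≤ σ * g T := mul_le_mul_of_nonneg_left h3 hσ.le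
      have h6 : σ * (-G) = -(σ*G) := by ring
      simp only [hB]
      linarith
    have hIlb : k/ε * (volume A).toReal ≤ ∫ s in (0:ℝ)..T, f s := by
      have hIoc : (∫ s in (0:ℝ)..T, f s) = ∫ s in Ioc (0:ℝ) T, f s :=
        intervalIntegral.integral_of_le hT.le
      have hindint : IntegrableOn (A.indicator (fun _ => k/ε)) (Ioc 0 T) volume := by
        apply Integrable.integrableOn
        rw [integrable_indicator_iff hAm]
        exact integrableOn_const hAfin
      have hfi : IntegrableOn f (Ioc 0 T) volume :=
        (hfc.integrableOn_Icc).mono_set Ioc_subset_Icc_self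
      have hind : (∫ s in Ioc (0:ℝ) T, A.indicator (fun _ => k/ε) s)
          ≤ ∫ s in Ioc (0:ℝ) T, f s := by
        apply setIntegral_mono_on hindint hfi measurableSet_Ioc
        intro s hs
        by_cases hsA : s ∈ A
        · rw [indicator_of_mem hsA]
          have hmax : max (X s) 0 = 0 := max_eq_right hsA.2
          have hfs : f s = (s+ε)^(2*H-1) / ε := by
            simp only [hfdef, hmax, zero_add]
          rw [hfs]
          have hnum : k ≤ (s+ε)^(2*H-1) :=
            Real.rpow_le_rpow_of_nonpos (by linarith [hs.1]) (by linarith [hs.2]) h2H1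
          exact (div_le_div_iff_of_pos_right hε0).2 hnum
        · rw [indicator_of_notMem hsA]
          exact hfnn s hs.1.le
      have hvalind : (∫ s in Ioc (0:ℝ) T, A.indicator (fun _ => k/ε) s)
          = k/ε * (volume A).toReal := by
        rw [setIntegral_indicator hAm, setIntegral_const, smul_eq_mul]
        have hAI : Ioc (0:ℝ) T ∩ A = A \ {0} := by
          ext x
          simp only [mem_inter_iff, mem_Ioc, mem_diff, mem_singleton_iff, hA, mem_sep_iff,
            mem_Icc]
          constructor
          · rintro ⟨⟨hx0, hxT⟩, hxA⟩
            exact ⟨hxA, ne_of_gt hx0⟩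
          · rintro ⟨⟨⟨hx0, hxT⟩, hxle⟩, hxne⟩
            exact ⟨⟨lt_of_le_of_ne hx0 (Ne.symm hxne), hxT⟩, ⟨⟨hx0, hxT⟩, hxle⟩⟩
        rw [hAI, measureReal_def, measure_diff_null (measure_singleton 0), mul_comm]
      calc k/ε * (volume A).toReal
          = ∫ s in Ioc (0:ℝ) T, A.indicator (fun _ => k/ε) s := hvalind.symm
        _ ≤ ∫ s in Ioc (0:ℝ) T, f s := hind
        _ = ∫ s in (0:ℝ)..T, f s := hIoc.symm
    have hm : (volume A).toReal ≤ C * ε := by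
      have h1 : a * (k/ε * (volume A).toReal) ≤ B :=
        le_trans (mul_le_mul_of_nonneg_left hIlb ha.le) hIub
      have h2 : a * (k/ε * (volume A).toReal) * ε ≤ B * ε :=
        mul_le_mul_of_nonneg_right h1 hε0.le
      have h3 : a * (k/ε * (volume A).toReal) * ε = (volume A).toReal * (a*k) := by
        field_simp
      rw [h3] at h2
      rw [hC, div_mul_eq_mul_div, le_div_iff₀ (by positivity : (0:ℝ) < a*k)]
      linarith
    calc volume A = ENNReal.ofReal (volume A).toReal := (ENNReal.ofReal_toReal hAfin).symm
      _ ≤ ENNReal.ofReal (C * ε) := ENNReal.ofReal_le_ofReal hm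
  -- squeeze
  apply tendsto_of_tendsto_of_tendsto_of_le_of_le'
    (tendsto_const_nhds : Tendsto (fun _ : ℝ => (0:ENNReal)) _ _)
  · have h1 : Tendsto (fun ε : ℝ => C * ε) (nhdsWithin 0 (Ioi 0)) (nhds 0) := by
      have h := (continuous_const.mul continuous_id : Continuous fun ε : ℝ => C * ε).tendsto 0
      have h' : Tendsto (fun ε : ℝ => C * ε) (nhds 0) (nhds (C * 0)) := h
      simpa only [mul_zero] using h'.mono_left nhdsWithin_le_nhds
    simpa using ENNReal.tendsto_ofReal h1
  · exact Eventually.of_forall (fun ε => zero_le)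
  · have h01 : (0:ℝ) ∈ Ico (0:ℝ) 1 := ⟨le_refl 0, zero_lt_one⟩
    filter_upwards [Ioo_mem_nhdsGT_of_mem h01] with ε hε
    exact hmeas ε ⟨hε.1, hε.2.le⟩
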